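/- For any root of unity ξ with ξ ≠ 1 and ξ ≠ -1, and any positive integer ℓ, the real part of the integral ∫₀^∞ Log(1 + (ξ-1)·e^{-ℓx}) dx is strictly negative, where Log denotes the principal branch of the complex logarithm. -/

import Mathlib

open Complex Real Filter Topology MeasureTheory Set

/-- For any root of unity `ξ ∉ {1, -1}` and positive integer `ℓ`, the real part of
`∫₀^∞ Log(1 + (ξ-1)e^{-ℓx}) dx` is strictly negative. -/
theorem re_integral_log_neg (ξ : ℂ) (k : ℕ) (hk : 1 ≤ k) (hξk : ξ ^ k = 1)
    (hξ1 : ξ ≠ 1) (hξneg1 : ξ ≠ -1) (ℓ : ℕ) (hℓ : 1 ≤ ℓ) :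
    (∫ x in Set.Ioi (0 : ℝ),
      Complex.log (1 + (ξ - 1) * Complex.exp (-(ℓ : ℂ) * (x : ℂ)))).re < 0 := by
  set a := ξ.re with ha_def
  set b := ξ.im with hb_def
  have habs : ‖ξ‖ = 1 := by
    have h : ‖ξ‖ ^ k = 1 := by rw [← norm_pow, hξk, norm_one]
    by_contra hne
    rcases lt_or_gt_of_ne hne with h1 | h1
    · have := pow_lt_one₀ (norm_nonneg ξ) h1 (by omega : k ≠ 0)
      linarith
    · have := one_lt_pow₀ h1 (by omega : k ≠ 0)
      linarith
  have hab : a ^ 2 + b ^ 2 = 1 := by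
    have h := Complex.sq_norm ξ
    rw [habs, Complex.normSq_apply] at h
    nlinarith [h]
  have hb : b ≠ 0 := by
    intro h0
    have h2 : (a - 1) * (a + 1) = 0 := by nlinarith
    rcases mul_eq_zero.1 h2 with h3 | h3
    · exact hξ1 (Complex.ext (by simp [← ha_def]; linarith) (by simp [← hb_def, h0]))
    · exact hξneg1 (Complex.ext (by simp [← ha_def]; linarith) (by simp [← hb_def, h0]))
  have ha1 : a < 1 := by nlinarith [lt_of_le_of_ne (sq_nonneg b) (Ne.symm (pow_ne_zero 2 hb))]
  set f : ℝ → ℂ := fun x => Complex.log (1 + (ξ - 1) * Complex.exp (-(ℓ : ℂ) * (x : ℂ))) with hf_def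
  have hcast : ∀ x : ℝ, Complex.exp (-(ℓ : ℂ) * (x : ℂ)) = ((Real.exp (-(ℓ : ℝ) * x) : ℝ) : ℂ) := by
    intro x
    rw [Complex.ofReal_exp]
    congr 1
    push_cast
    ring
  have hzre : ∀ x : ℝ, (1 + (ξ - 1) * Complex.exp (-(ℓ : ℂ) * (x : ℂ))).re
      = 1 + (a - 1) * Real.exp (-(ℓ : ℝ) * x) := by
    intro x
    rw [hcast x]
    simp only [Complex.add_re, Complex.one_re, Complex.mul_re, Complex.sub_re, Complex.sub_im,
      Complex.one_im, Complex.ofReal_re, Complex.ofReal_im, ← ha_def]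
    ring
  have hzim : ∀ x : ℝ, (1 + (ξ - 1) * Complex.exp (-(ℓ : ℂ) * (x : ℂ))).im
      = b * Real.exp (-(ℓ : ℝ) * x) := by
    intro x
    rw [hcast x]
    simp only [Complex.add_im, Complex.one_im, Complex.mul_im, Complex.sub_re, Complex.sub_im,
      Complex.one_re, Complex.ofReal_re, Complex.ofReal_im, ← hb_def]
    ring
  have him_ne : ∀ x : ℝ, (1 + (ξ - 1) * Complex.exp (-(ℓ : ℂ) * (x : ℂ))).im ≠ 0 := by
    intro x
    rw [hzim]
    exact mul_ne_zero hb (Real.exp_ne_zero _)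
  have hcont : Continuous f := by
    rw [continuous_iff_continuousAt]
    intro x
    apply ContinuousAt.comp (continuousAt_clog ?_) (by fun_prop)
    exact Or.inr (him_ne x)
  have hℓpos : (0 : ℝ) < ℓ := by positivity
  have hint : IntegrableOn f (Ioi 0) := by
    rw [show Ioi (0 : ℝ) = Ioc 0 2 ∪ Ioi 2 from (Set.Ioc_union_Ioi_eq_Ioi (by norm_num)).symm]
    apply IntegrableOn.union
    · exact hcont.integrableOn_Ioc
    · apply Integrable.mono' ((exp_neg_integrableOn_Ioi 2 hℓpos).const_mul 3)
        hcont.aestronglyMeasurable.restrict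
      filter_upwards [ae_restrict_mem measurableSet_Ioi] with x hx
      have hx2 : (2 : ℝ) < x := hx
      have hℓ1 : (1 : ℝ) ≤ ℓ := by exact_mod_cast hℓ
      have ht : Real.exp (-(ℓ : ℝ) * x) ≤ Real.exp (-2) := by
        apply Real.exp_le_exp.2
        nlinarith
      have hw : ‖(ξ - 1) * Complex.exp (-(ℓ : ℂ) * (x : ℂ))‖ ≤ 2 * Real.exp (-(ℓ : ℝ) * x) := by
        rw [norm_mul]
        have h1 : ‖ξ - 1‖ ≤ 2 := by
          calc ‖ξ - 1‖ ≤ ‖ξ‖ + ‖(1 : ℂ)‖ := norm_sub_le _ _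
          _ = 2 := by rw [habs]; norm_num
        have h2 : ‖Complex.exp (-(ℓ : ℂ) * (x : ℂ))‖ = Real.exp (-(ℓ : ℝ) * x) := by
          rw [hcast, Complex.norm_real, Real.norm_eq_abs, abs_of_pos (Real.exp_pos _)]
        rw [h2]
        exact mul_le_mul_of_nonneg_right h1 (Real.exp_pos _).le
      have he : Real.exp (-2 : ℝ) ≤ 1 / 4 := by
        have h1 : (2.7182818283 : ℝ) < Real.exp 1 := Real.exp_one_gt_d9
        have h2 : Real.exp 2 = Real.exp 1 * Real.exp 1 := by rw [← Real.exp_add]; norm_num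
        have h4 : (4 : ℝ) ≤ Real.exp 2 := by nlinarith
        rw [Real.exp_neg]
        rw [inv_le_comm₀ (Real.exp_pos 2) (by norm_num)]
        linarith
      have hhalf : ‖(ξ - 1) * Complex.exp (-(ℓ : ℂ) * (x : ℂ))‖ ≤ 1 / 2 := by linarith
      calc ‖f x‖ ≤ (3 / 2) * ‖(ξ - 1) * Complex.exp (-(ℓ : ℂ) * (x : ℂ))‖ :=
            Complex.norm_log_one_add_half_le_self hhalf
        _ ≤ 3 * Real.exp (-(ℓ : ℝ) * x) := by linarith
  have key : ∀ x ∈ Ioi (0 : ℝ), (f x).re < 0 := by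
    intro x hx
    have hxpos : (0 : ℝ) < x := hx
    set t := Real.exp (-(ℓ : ℝ) * x) with htdef
    have ht0 : 0 < t := Real.exp_pos _
    have hℓ1 : (1 : ℝ) ≤ ℓ := by exact_mod_cast hℓ
    have ht1 : t < 1 := by
      rw [htdef]
      apply Real.exp_lt_one_iff.2
      nlinarith
    have hzne : (1 + (ξ - 1) * Complex.exp (-(ℓ : ℂ) * (x : ℂ))) ≠ 0 := by
      intro h0
      apply him_ne x
      rw [h0]
      simp
    have habs_lt : ‖(1 + (ξ - 1) * Complex.exp (-(ℓ : ℂ) * (x : ℂ)))‖ < 1 := by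
      have hsq : Complex.normSq (1 + (ξ - 1) * Complex.exp (-(ℓ : ℂ) * (x : ℂ))) < 1 := by
        rw [Complex.normSq_apply, hzre x, hzim x, ← htdef]
        have hid : (1 + (a - 1) * t) * (1 + (a - 1) * t) + b * t * (b * t)
            = 1 - 2 * (1 - a) * (t * (1 - t)) := by linear_combination t ^ 2 * hab
        rw [hid]
        nlinarith [mul_pos (mul_pos (show (0 : ℝ) < 1 - a by linarith) ht0)
          (show (0 : ℝ) < 1 - t by linarith)]
      have h1 := Complex.sq_norm (1 + (ξ - 1) * Complex.exp (-(ℓ : ℂ) * (x : ℂ)))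
      nlinarith [norm_nonneg (1 + (ξ - 1) * Complex.exp (-(ℓ : ℂ) * (x : ℂ)))]
    rw [hf_def]
    simp only [Complex.log_re]
    exact Real.log_neg (norm_pos_iff.2 hzne) habs_lt
  have heq : (∫ x in Ioi (0 : ℝ), f x).re = ∫ x in Ioi (0 : ℝ), (f x).re := by
    have h := integral_re (𝕜 := ℂ) hint
    simp only [RCLike.re_to_complex] at h
    exact h.symm
  rw [show (∫ x in Set.Ioi (0 : ℝ),
      Complex.log (1 + (ξ - 1) * Complex.exp (-(ℓ : ℂ) * (x : ℂ)))) = ∫ x in Ioi (0 : ℝ), f x from rfl,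
    heq]
  have hpos : 0 < ∫ x in Ioi (0 : ℝ), (-(f x).re) := by
    rw [setIntegral_pos_iff_support_of_nonneg_ae]
    · apply lt_of_lt_of_le _ (measure_mono (show Ioi (0 : ℝ) ⊆
        Function.support (fun x => -(f x).re) ∩ Ioi 0 from
        fun x hx => ⟨by simp only [Function.mem_support]; intro h; linarith [key x hx, neg_eq_zero.1 h], hx⟩))
      rw [Real.volume_Ioi]
      exact ENNReal.zero_lt_top
    · rw [EventuallyLE, ae_restrict_iff' measurableSet_Ioi]
      filter_upwards with x hx
      simp only [Pi.zero_apply]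
      linarith [key x hx]
    · exact hint.re.neg
  rw [integral_neg] at hpos
  linarith
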